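/- Let N ≥ 2, α ≥ 0, and let λ_1 < λ_2 be the two smallest eigenvalues of H_{αU}(P_N) with unit eigenvectors u(λ_1), u(λ_2). If u_1(λ_2)² ≤ u_1(λ_1)², then Σ_{i=1}^{N} (i − 1)·(u_i(λ_2)² − u_i(λ_1)²) ≥ 0 (by the Hellmann–Feynman theorem this sum equals the derivative dΓ/dα of the gap of H_{αU}(P_N) with respect to α). -/

import Mathlib

open Matrix

/-- The path Schrödinger operator `H_W(P_N)`; vertex `i : Fin N` has label `i + 1`. -/
noncomputable def pathH (N : ℕ) (W : ℕ → ℝ) : Matrix (Fin N) (Fin N) ℝ :=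
  Matrix.of fun i j =>
    if i = j then
      (if (i : ℕ) = 0 ∨ (i : ℕ) = N - 1 then (1 : ℝ) else 2) + W ((i : ℕ) + 1)
    else if (i : ℕ) + 1 = (j : ℕ) ∨ (j : ℕ) + 1 = (i : ℕ) then -1 else 0

/-- `μ` is an eigenvalue of the real matrix `A`. -/
def IsEigen {n : ℕ} (A : Matrix (Fin n) (Fin n) ℝ) (μ : ℝ) : Prop :=
  ∃ v : Fin n → ℝ, v ≠ 0 ∧ A.mulVec v = μ • v

/-- `l1 < l2` are the two smallest eigenvalues of `A`. -/
def TwoSmallest {n : ℕ} (A : Matrix (Fin n) (Fin n) ℝ) (l1 l2 : ℝ) : Prop :=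
  IsEigen A l1 ∧ IsEigen A l2 ∧ l1 < l2 ∧
    ∀ μ, IsEigen A μ → l1 ≤ μ ∧ (μ ≠ l1 → l2 ≤ μ)

section G12
variable {n : ℕ} (S : Matrix (Fin n) (Fin n) ℝ)

lemma real_star_mat (U : Matrix (Fin n) (Fin n) ℝ) : star U = Uᵀ := by
  ext i j; simp [Matrix.star_apply]

lemma G12 (hS : S.IsHermitian) (b : ℝ) (hlb : ∀ μ, IsEigen S μ → b ≤ μ)
    (x : Fin n → ℝ) (hq : x ⬝ᵥ S.mulVec x ≤ b * (x ⬝ᵥ x)) : S.mulVec x = b • x := by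
  classical
  set U : Matrix (Fin n) (Fin n) ℝ := (hS.eigenvectorUnitary : Matrix (Fin n) (Fin n) ℝ) with hUdef
  set d : Fin n → ℝ := hS.eigenvalues with hddef
  have hspec : S = U * Matrix.diagonal d * Uᵀ := by
    have := hS.spectral_theorem
    rw [Unitary.conjStarAlgAut_apply] at this
    rw [real_star_mat] at this
    simpa using this
  have hU1 : U * Uᵀ = 1 := by
    have := hS.eigenvectorUnitary.2
    rw [Unitary.mem_iff] at this
    rw [← real_star_mat]
    exact this.2
  have hU2 : Uᵀ * U = 1 := by
    have := hS.eigenvectorUnitary.2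
    rw [Unitary.mem_iff] at this
    rw [← real_star_mat]
    exact this.1
  -- each d i is an eigenvalue
  have heig : ∀ i, IsEigen S (d i) := by
    intro i
    refine ⟨fun j => U j i, ?_, ?_⟩
    · intro hz
      have h2 : (fun j => U j i) ⬝ᵥ (fun j => U j i) = 1 := by
        have := congrFun (congrFun hU2 i) i
        simpa [Matrix.mul_apply, dotProduct, mul_comm, Matrix.one_apply] using this
      rw [hz] at h2
      simp [dotProduct] at h2
    · have : S * U = U * Matrix.diagonal d := by
        rw [hspec, Matrix.mul_assoc, Matrix.mul_assoc, hU2, Matrix.mul_one]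
      funext j
      have := congrFun (congrFun this j) i
      simp only [Matrix.mul_apply, Matrix.diagonal_apply, mulVec, dotProduct] at this ⊢
      rw [this]
      simp [Finset.sum_ite_eq' Finset.univ i, mul_comm]
  set c : Fin n → ℝ := Uᵀ.mulVec x with hcdef
  have hxc : U.mulVec c = x := by
    rw [hcdef, mulVec_mulVec, hU1, one_mulVec]
  have hq1 : x ⬝ᵥ S.mulVec x = ∑ i, d i * c i ^ 2 := by
    rw [hspec, ← mulVec_mulVec, ← mulVec_mulVec, dotProduct_mulVec, ← mulVec_transpose]
    simp only [← hcdef, dotProduct, mulVec_diagonal]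
    apply Finset.sum_congr rfl; intro i _; ring
  have hq2 : x ⬝ᵥ x = ∑ i, c i ^ 2 := by
    conv_lhs => rw [← hxc]
    rw [dotProduct_mulVec, ← mulVec_transpose, mulVec_mulVec, hU2, one_mulVec]
    simp only [dotProduct]
    apply Finset.sum_congr rfl; intro i _; ring
  have hsumle : ∑ i, (d i - b) * c i ^ 2 ≤ 0 := by
    have he : ∑ i, (d i - b) * c i ^ 2 = (∑ i, d i * c i ^ 2) - b * ∑ i, c i ^ 2 := by
      rw [Finset.mul_sum, ← Finset.sum_sub_distrib]
      apply Finset.sum_congr rfl; intro i _; ring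
    rw [he, ← hq1, ← hq2]; linarith
  have hterm : ∀ i ∈ Finset.univ, 0 ≤ (d i - b) * c i ^ 2 := by
    intro i _
    have := hlb (d i) (heig i)
    nlinarith [sq_nonneg (c i)]
  have hall : ∀ i ∈ Finset.univ, (d i - b) * c i ^ 2 = 0 := by
    rw [← Finset.sum_eq_zero_iff_of_nonneg hterm]
    exact le_antisymm hsumle (Finset.sum_nonneg hterm)
  have hzero : ∀ i, d i * c i = b * c i := by
    intro i
    have h0 := hall i (Finset.mem_univ i)
    rcases mul_eq_zero.mp h0 with h1 | h2
    · have : d i = b := by linarith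
      rw [this]
    · have : c i = 0 := by
        have := sq_eq_zero_iff.mp h2
        exact this
      rw [this, mul_zero, mul_zero]
  have hDc : Matrix.diagonal d *ᵥ c = b • c := by
    funext i
    simp [mulVec_diagonal, hzero i, Pi.smul_apply, smul_eq_mul]
  rw [hspec, ← mulVec_mulVec, ← mulVec_mulVec, ← hcdef, hDc, mulVec_smul, hxc]

end G12

lemma sum_ite_nat {n : ℕ} (s : ℕ) (F : Fin n → ℝ) :
    (∑ j : Fin n, if (j : ℕ) = s then F j else 0) = if h : s < n then F ⟨s, h⟩ else 0 := by
  split_ifs with h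
  · rw [Finset.sum_congr rfl (g := fun j => if j = (⟨s, h⟩ : Fin n) then F j else 0)]
    · simp
    · intro j _
      congr 1
      simp [Fin.ext_iff]
  · apply Finset.sum_eq_zero
    intro j _
    have := j.isLt
    rw [if_neg]
    omega

lemma sum_ite_nat' {n : ℕ} (s : ℕ) (F : Fin n → ℝ) :
    (∑ j : Fin n, if (j : ℕ) + 1 = s then F j else 0)
      = if h : s - 1 < n ∧ 1 ≤ s then F ⟨s - 1, h.1⟩ else 0 := by
  split_ifs with h
  · rw [show (∑ j : Fin n, if (j : ℕ) + 1 = s then F j else 0)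
        = ∑ j : Fin n, if (j : ℕ) = s - 1 then F j else 0 from
      Finset.sum_congr rfl (fun j _ => by congr 1; simp only [eq_iff_iff]; omega)]
    rw [sum_ite_nat, dif_pos h.1]
  · apply Finset.sum_eq_zero
    intro j _
    have := j.isLt
    rw [if_neg]
    omega

/-- quadratic form comparison with |x| for matrices with nonpositive off-diagonal -/
lemma abs_quad_le {n : ℕ} (S : Matrix (Fin n) (Fin n) ℝ)
    (hoff : ∀ i j, i ≠ j → S i j ≤ 0) (x : Fin n → ℝ) :
    (fun i => |x i|) ⬝ᵥ S.mulVec (fun i => |x i|) ≤ x ⬝ᵥ S.mulVec x := by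
  simp only [dotProduct, mulVec]
  simp only [Finset.mul_sum]
  apply Finset.sum_le_sum
  intro i _
  apply Finset.sum_le_sum
  intro j _
  by_cases hij : i = j
  · subst hij
    have h2 : |x i| * |x i| = x i * x i := by
      rw [← abs_mul, abs_mul_self]
    have : |x i| * (S i i * |x i|) = x i * (S i i * x i) := by
      rw [show |x i| * (S i i * |x i|) = S i i * (|x i| * |x i|) from by ring, h2]; ring
    linarith [this.le]
  · have habs : x i * x j ≤ |x i| * |x j| := by
      rw [← abs_mul]; exact le_abs_self _
    have h2 := mul_le_mul_of_nonpos_left habs (hoff i j hij)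
    nlinarith [h2]

lemma pos_of_nonneg_eig {n : ℕ} (S : Matrix (Fin n) (Fin n) ℝ) (b : ℝ)
    (hoff : ∀ i j, i ≠ j → S i j ≤ 0)
    (hadjR : ∀ (k : ℕ) (h : k + 1 < n), S ⟨k, by omega⟩ ⟨k + 1, h⟩ < 0)
    (hadjL : ∀ (k : ℕ) (h : k + 1 < n), S ⟨k + 1, h⟩ ⟨k, by omega⟩ < 0)
    (x : Fin n → ℝ) (hx : S.mulVec x = b • x) (hxn : ∀ i, 0 ≤ x i) (hx0 : x ≠ 0) :
    ∀ i, 0 < x i := by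
  classical
  -- zeros propagate to neighbours
  have hprop : ∀ i : Fin n, x i = 0 → ∀ j : Fin n, S i j < 0 → x j = 0 := by
    intro i hi j hSij
    have hrow : ∑ j, S i j * x j = 0 := by
      have := congrFun hx i
      simp only [mulVec, dotProduct, Pi.smul_apply, smul_eq_mul] at this
      rw [this, hi, mul_zero]
    have hterms : ∀ j ∈ Finset.univ, S i j * x j ≤ 0 := by
      intro j _
      by_cases hji : j = i
      · rw [hji, hi, mul_zero]
      · exact mul_nonpos_of_nonpos_of_nonneg (hoff i j (fun hh => hji hh.symm)) (hxn j)
    have hz := (Finset.sum_eq_zero_iff_of_nonpos hterms).mp hrow j (Finset.mem_univ j)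
    rcases mul_eq_zero.mp hz with h1 | h2
    · exact absurd h1 (ne_of_lt hSij)
    · exact h2
  -- if some entry is zero, all are zero
  have hallzero : ∀ i : Fin n, x i = 0 → ∀ j : Fin n, x j = 0 := by
    intro i hi
    have hR : ∀ m : ℕ, (i : ℕ) ≤ m → ∀ hm : m < n, x ⟨m, hm⟩ = 0 := by
      intro m
      induction m with
      | zero => intro him hm; have : (i : ℕ) = 0 := by omega
                have : i = ⟨0, hm⟩ := by simp [Fin.ext_iff, this]
                rw [← this]; exact hi
      | succ m ih =>
        intro him hm
        by_cases hcase : (i : ℕ) ≤ m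
        · have hm' : m < n := by omega
          have hxm := ih hcase hm'
          have hmm : m + 1 < n := hm
          exact hprop ⟨m, by omega⟩ hxm ⟨m+1, hm⟩ (hadjR m hmm)
        · have : (i : ℕ) = m + 1 := by omega
          have : i = ⟨m+1, hm⟩ := by simp [Fin.ext_iff, this]
          rw [← this]; exact hi
    have hL : ∀ m : ℕ, m ≤ (i : ℕ) → x ⟨(i : ℕ) - m, by have := i.isLt; omega⟩ = 0 := by
      intro m
      induction m with
      | zero => intro _; simpa using hi
      | succ m ih =>
        intro hmi
        have h1 := ih (by omega)
        have hlt : ((i : ℕ) - m - 1) + 1 < n := by have := i.isLt; omega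
        have h2 := hprop ⟨(i:ℕ) - m, by have := i.isLt; omega⟩ h1
            ⟨(i:ℕ) - (m+1), by have := i.isLt; omega⟩ ?_
        · exact h2
        · have he1 : ((i:ℕ) - m) = ((i:ℕ) - (m+1)) + 1 := by omega
          have : (⟨(i:ℕ) - m, by have := i.isLt; omega⟩ : Fin n)
              = ⟨((i:ℕ) - (m+1)) + 1, by have := i.isLt; omega⟩ := by simp [Fin.ext_iff]; omega
          rw [this]
          exact hadjL ((i:ℕ) - (m+1)) (by have := i.isLt; omega)
    intro j
    by_cases hij : (i : ℕ) ≤ (j : ℕ)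
    · have := hR (j : ℕ) hij j.isLt
      simpa using this
    · have h2 := hL ((i : ℕ) - (j : ℕ)) (by omega)
      have : (i : ℕ) - ((i:ℕ) - (j:ℕ)) = (j : ℕ) := by omega
      simpa [this] using h2
  intro i
  rcases lt_or_eq_of_le (hxn i) with h | h
  · exact h
  · exfalso
    apply hx0
    funext j
    exact hallzero i h.symm j

noncomputable def aa (N : ℕ) (α : ℝ) (k : ℕ) : ℝ :=
  (if k = 0 ∨ k = N - 1 then (1 : ℝ) else 2) + α * k

noncomputable def Amat (N : ℕ) (α : ℝ) : Matrix (Fin N) (Fin N) ℝ :=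
  pathH N (fun i => α * ((i : ℝ) - 1))

noncomputable def extZ (N : ℕ) (z : Fin N → ℝ) (k : ℕ) : ℝ :=
  if h : k < N then z ⟨k, h⟩ else 0

lemma extZ_val {N : ℕ} (z : Fin N → ℝ) (i : Fin N) : extZ N z (i : ℕ) = z i := by
  rw [extZ, dif_pos i.isLt]

lemma A_apply' {N : ℕ} {α : ℝ} (i j : Fin N) :
    Amat N α i j = if (i : ℕ) = (j : ℕ) then aa N α (i : ℕ)
      else if ((i : ℕ) + 1 = (j : ℕ) ∨ (j : ℕ) + 1 = (i : ℕ)) then -1 else 0 := by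
  by_cases h : (i : ℕ) = (j : ℕ)
  · have hij : i = j := Fin.ext h
    subst hij
    simp only [Amat, pathH, Matrix.of_apply, if_pos rfl, if_pos h]
    unfold aa
    push_cast
    ring
  · have hij : i ≠ j := fun hh => h (by rw [hh])
    simp only [Amat, pathH, Matrix.of_apply, if_neg hij, if_neg h]

lemma A_mulVec {N : ℕ} {α : ℝ} (z : Fin N → ℝ) (k : ℕ) (hk : k < N) :
    (Amat N α).mulVec z ⟨k, hk⟩
      = aa N α k * extZ N z k - extZ N z (k + 1)
        - (if 1 ≤ k then extZ N z (k - 1) else 0) := by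
  have hdecomp : ∀ j : Fin N, Amat N α ⟨k, hk⟩ j * z j =
      (if (j : ℕ) = k then aa N α k * z j else 0)
      + ((if (j : ℕ) = k + 1 then -z j else 0)
      + (if (j : ℕ) + 1 = k then -z j else 0)) := by
    intro j
    rw [A_apply']
    simp only [Fin.val_mk]
    split_ifs <;> (try omega) <;> ring
  show (∑ j, Amat N α ⟨k, hk⟩ j * z j) = _
  rw [Finset.sum_congr rfl (fun j _ => hdecomp j), Finset.sum_add_distrib,
    Finset.sum_add_distrib, sum_ite_nat, sum_ite_nat, sum_ite_nat']
  rw [dif_pos hk]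
  have h1 : (if h : k + 1 < N then -z ⟨k + 1, h⟩ else 0) = -extZ N z (k + 1) := by
    rw [extZ]; split_ifs <;> simp
  have h2 : (if h : k - 1 < N ∧ 1 ≤ k then -z ⟨k - 1, h.1⟩ else 0)
      = -(if 1 ≤ k then extZ N z (k - 1) else 0) := by
    by_cases hc : 1 ≤ k
    · rw [if_pos hc, dif_pos (⟨by omega, hc⟩ : k - 1 < N ∧ 1 ≤ k), extZ,
        dif_pos (by omega : k - 1 < N)]
    · rw [if_neg hc, dif_neg (by omega), neg_zero]
  rw [h1, h2, show extZ N z k = z ⟨k, hk⟩ from by rw [extZ, dif_pos hk]]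
  ring

lemma row0 {N : ℕ} {α l : ℝ} {z : Fin N → ℝ} (hN : 2 ≤ N)
    (hz : (Amat N α).mulVec z = l • z) :
    aa N α 0 * extZ N z 0 - extZ N z 1 = l * extZ N z 0 := by
  have h0 : (0 : ℕ) < N := by omega
  have hthis := congrFun hz ⟨0, h0⟩
  rw [A_mulVec z 0 h0] at hthis
  simp only [Pi.smul_apply, smul_eq_mul] at hthis
  rw [if_neg (by omega)] at hthis
  rw [show extZ N z 0 = z ⟨0, h0⟩ from by rw [extZ, dif_pos h0]] at hthis ⊢
  rw [show (0 : ℕ) + 1 = 1 from rfl] at hthis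
  linarith [hthis]

lemma rowS {N : ℕ} {α l : ℝ} {z : Fin N → ℝ} (k : ℕ) (hk : k + 1 < N)
    (hz : (Amat N α).mulVec z = l • z) :
    aa N α (k + 1) * extZ N z (k + 1) - extZ N z k - extZ N z (k + 2)
      = l * extZ N z (k + 1) := by
  have hthis := congrFun hz ⟨k + 1, hk⟩
  rw [A_mulVec z (k + 1) hk] at hthis
  simp only [Pi.smul_apply, smul_eq_mul] at hthis
  rw [if_pos (by omega), show k + 1 - 1 = k from rfl,
    show k + 1 + 1 = k + 2 from rfl] at hthis
  rw [show extZ N z (k + 1) = z ⟨k + 1, hk⟩ from by rw [extZ, dif_pos hk]] at hthis ⊢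
  linarith [hthis]

lemma eig_zero0 {N : ℕ} {α l : ℝ} {z : Fin N → ℝ} (hN : 2 ≤ N)
    (hz : (Amat N α).mulVec z = l • z) (h0 : extZ N z 0 = 0) : z = 0 := by
  have key : ∀ k : ℕ, extZ N z k = 0 ∧ extZ N z (k + 1) = 0 := by
    intro k
    induction k with
    | zero =>
      refine ⟨h0, ?_⟩
      have := row0 hN hz
      rw [h0] at this
      linarith
    | succ k ih =>
      refine ⟨ih.2, ?_⟩
      by_cases hk : k + 1 < N
      · have := rowS k hk hz
        rw [ih.1, ih.2] at this
        linarith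
      · rw [extZ, dif_neg (by omega)]
  funext i
  have := (key (i : ℕ)).1
  rw [extZ_val] at this
  simpa using this

lemma A_herm {N : ℕ} {α : ℝ} : (Amat N α).IsHermitian := by
  unfold Matrix.IsHermitian
  ext i j
  rw [Matrix.conjTranspose_apply, star_trivial, A_apply', A_apply']
  by_cases h : (i : ℕ) = (j : ℕ)
  · rw [if_pos h, if_pos h.symm, h]
  · rw [if_neg h, if_neg (fun hh => h hh.symm)]
    by_cases h2 : (i : ℕ) + 1 = (j : ℕ) ∨ (j : ℕ) + 1 = (i : ℕ)
    · rw [if_pos h2, if_pos (Or.symm h2)]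
    · rw [if_neg h2, if_neg (fun hh => h2 (Or.symm hh))]

lemma A_offdiag {N : ℕ} {α : ℝ} (i j : Fin N) (hij : i ≠ j) : Amat N α i j ≤ 0 := by
  rw [A_apply', if_neg (fun hh => hij (Fin.ext hh))]
  split_ifs <;> norm_num

lemma A_adjR {N : ℕ} {α : ℝ} (k : ℕ) (hk : k + 1 < N) :
    Amat N α ⟨k, by omega⟩ ⟨k + 1, hk⟩ < 0 := by
  rw [A_apply']
  simp only [Fin.val_mk]
  rw [if_neg (by omega)]
  norm_num

lemma A_adjL {N : ℕ} {α : ℝ} (k : ℕ) (hk : k + 1 < N) :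
    Amat N α ⟨k + 1, hk⟩ ⟨k, by omega⟩ < 0 := by
  rw [A_apply']
  simp only [Fin.val_mk]
  rw [if_neg (by omega)]
  norm_num

lemma T_herm {N : ℕ} (C : Matrix (Fin N) (Fin (N - 1)) ℝ) : (Cᵀ * C).IsHermitian := by
  unfold Matrix.IsHermitian
  ext k l
  rw [Matrix.conjTranspose_apply, star_trivial, Matrix.mul_apply, Matrix.mul_apply]
  simp only [Matrix.transpose_apply]
  exact Finset.sum_congr rfl (fun i _ => mul_comm _ _)

noncomputable def pv (N : ℕ) (v : Fin N → ℝ) (k : ℕ) : ℝ := extZ N v k * extZ N v (k + 1)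

noncomputable def Cmat (N : ℕ) (v : Fin N → ℝ) : Matrix (Fin N) (Fin (N - 1)) ℝ :=
  Matrix.of fun i k =>
    if (i : ℕ) = (k : ℕ) then Real.sqrt (pv N v (k : ℕ)) / v i
    else if (i : ℕ) = (k : ℕ) + 1 then -(Real.sqrt (pv N v (k : ℕ)) / v i) else 0

section CFacts
variable {N : ℕ} {α l1 : ℝ} {v : Fin N → ℝ}

lemma pv_pos (hv : ∀ i, 0 < v i) {k : ℕ} (hk : k + 1 < N) : 0 < pv N v k := by
  rw [pv, extZ, extZ, dif_pos (by omega : k < N), dif_pos hk]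
  exact mul_pos (hv _) (hv _)

lemma sqrt_pv_pos (hv : ∀ i, 0 < v i) {k : ℕ} (hk : k + 1 < N) :
    0 < Real.sqrt (pv N v k) := Real.sqrt_pos.mpr (pv_pos hv hk)

lemma extZ_pos (hv : ∀ i, 0 < v i) {k : ℕ} (hk : k < N) : 0 < extZ N v k := by
  rw [extZ, dif_pos hk]; exact hv _

end CFacts

section CFacts2
variable {N : ℕ} {α l1 : ℝ} {v : Fin N → ℝ}

lemma CCt (hN : 2 ≤ N) (hv : ∀ i, 0 < v i)
    (hveig : (Amat N α).mulVec v = l1 • v) :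
    Cmat N v * (Cmat N v)ᵀ = Amat N α - l1 • (1 : Matrix (Fin N) (Fin N) ℝ) := by
  ext i j
  rw [Matrix.mul_apply]
  simp only [Matrix.transpose_apply]
  rw [Matrix.sub_apply, Matrix.smul_apply, Matrix.one_apply, A_apply']
  have hkN : ∀ k : Fin (N - 1), (k : ℕ) + 1 < N := by
    intro k; have := k.isLt; omega
  by_cases hij : (i : ℕ) = (j : ℕ)
  · have hij' : i = j := Fin.ext hij
    subst hij'
    rw [if_pos rfl, if_pos rfl]
    have hdecomp : ∀ k : Fin (N - 1), Cmat N v i k * Cmat N v i k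
        = (if (k : ℕ) = (i : ℕ) then pv N v (k : ℕ) / (v i * v i) else 0)
          + (if (k : ℕ) + 1 = (i : ℕ) then pv N v (k : ℕ) / (v i * v i) else 0) := by
      intro k
      have hp := (pv_pos hv (hkN k)).le
      simp only [Cmat, Matrix.of_apply]
      split_ifs <;> (try omega) <;>
        first
          | ring1
          | linear_combination ((v i)⁻¹ * (v i)⁻¹) * Real.mul_self_sqrt hp
    rw [Finset.sum_congr rfl (fun k _ => hdecomp k), Finset.sum_add_distrib,
      sum_ite_nat, sum_ite_nat']
    set m := (i : ℕ) with hm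
    have hmN : m < N := i.isLt
    have hvi : v i = extZ N v m := (extZ_val v i).symm
    by_cases h0 : m = 0
    · rw [dif_pos (by omega : m < N - 1), dif_neg (by omega)]
      have hrow := row0 (α := α) hN hveig
      have hZ0 : 0 < extZ N v 0 := extZ_pos hv (by omega)
      simp only [Fin.val_mk, h0, add_zero]
      rw [hvi, h0, pv, show (0 : ℕ) + 1 = 1 from rfl]
      field_simp
      linear_combination (-1 : ℝ) * hrow
    · have h1m : 1 ≤ m := by omega
      have hrow := rowS (α := α) (m - 1) (by omega) hveig
      rw [show m - 1 + 1 = m from by omega, show m - 1 + 2 = m + 1 from by omega] at hrow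
      have hZm : 0 < extZ N v m := extZ_pos hv hmN
      by_cases hNm : m = N - 1
      · rw [dif_neg (by omega), dif_pos (⟨by omega, h1m⟩ : m - 1 < N - 1 ∧ 1 ≤ m)]
        rw [show extZ N v (m + 1) = 0 from by rw [extZ, dif_neg (by omega)]] at hrow
        simp only [Fin.val_mk]
        rw [hvi, pv, show m - 1 + 1 = m from by omega]
        field_simp
        linear_combination (-1 : ℝ) * hrow
      · rw [dif_pos (by omega : m < N - 1), dif_pos (⟨by omega, h1m⟩ : m - 1 < N - 1 ∧ 1 ≤ m)]
        simp only [Fin.val_mk]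
        rw [hvi, pv, pv, show m - 1 + 1 = m from by omega]
        field_simp
        linear_combination (-1 : ℝ) * hrow
  · have hij' : i ≠ j := fun hh => hij (by rw [hh])
    rw [if_neg hij]
    by_cases hadj : (i : ℕ) + 1 = (j : ℕ)
    · have hdecomp : ∀ k : Fin (N - 1), Cmat N v i k * Cmat N v j k
          = (if (k : ℕ) = (i : ℕ) then -(pv N v (k : ℕ) / (v i * v j)) else 0) := by
        intro k
        have hp := (pv_pos hv (hkN k)).le
        simp only [Cmat, Matrix.of_apply]
        split_ifs <;> (try omega) <;>
          first
            | ring1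
            | linear_combination (-((v i)⁻¹ * (v j)⁻¹)) * Real.mul_self_sqrt hp
      rw [Finset.sum_congr rfl (fun k _ => hdecomp k), sum_ite_nat,
        dif_pos (by have := j.isLt; omega : (i : ℕ) < N - 1)]
      simp only [Fin.val_mk]
      rw [if_pos (Or.inl hadj), if_neg hij', pv, hadj, extZ_val, extZ_val]
      rw [div_self (ne_of_gt (mul_pos (hv i) (hv j))), smul_eq_mul, mul_zero, sub_zero]
    · by_cases hadj' : (j : ℕ) + 1 = (i : ℕ)
      · have hdecomp : ∀ k : Fin (N - 1), Cmat N v i k * Cmat N v j k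
            = (if (k : ℕ) = (j : ℕ) then -(pv N v (k : ℕ) / (v i * v j)) else 0) := by
          intro k
          have hp := (pv_pos hv (hkN k)).le
          simp only [Cmat, Matrix.of_apply]
          split_ifs <;> (try omega) <;>
            first
              | ring1
              | linear_combination (-((v i)⁻¹ * (v j)⁻¹)) * Real.mul_self_sqrt hp
        rw [Finset.sum_congr rfl (fun k _ => hdecomp k), sum_ite_nat,
          dif_pos (by have := i.isLt; omega : (j : ℕ) < N - 1)]
        simp only [Fin.val_mk]
        rw [if_pos (Or.inr hadj'), if_neg hij', pv, hadj', extZ_val, extZ_val]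
        rw [mul_comm (v j) (v i), div_self (ne_of_gt (mul_pos (hv i) (hv j))), smul_eq_mul, mul_zero, sub_zero]
      · have hdecomp : ∀ k : Fin (N - 1), Cmat N v i k * Cmat N v j k = 0 := by
          intro k
          simp only [Cmat, Matrix.of_apply]
          split_ifs <;> (try omega) <;> ring
        rw [Finset.sum_congr rfl (fun k _ => hdecomp k), Finset.sum_const_zero]
        rw [if_neg (by omega : ¬((i : ℕ) + 1 = (j : ℕ) ∨ (j : ℕ) + 1 = (i : ℕ))), if_neg hij']
        simp

end CFacts2

section CFacts3
variable {N : ℕ} {v : Fin N → ℝ}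

lemma T_offdiag (hv : ∀ i, 0 < v i) (k l : Fin (N - 1)) (hkl : k ≠ l) :
    ((Cmat N v)ᵀ * Cmat N v) k l ≤ 0 := by
  have hkl' : (k : ℕ) ≠ (l : ℕ) := fun hh => hkl (Fin.ext hh)
  have hkN : (k : ℕ) + 1 < N := by have := k.isLt; omega
  have hlN : (l : ℕ) + 1 < N := by have := l.isLt; omega
  rw [Matrix.mul_apply]
  simp only [Matrix.transpose_apply]
  by_cases hadj : (l : ℕ) = (k : ℕ) + 1
  · have hdecomp : ∀ i : Fin N, Cmat N v i k * Cmat N v i l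
        = (if (i : ℕ) = (k : ℕ) + 1 then
            -(Real.sqrt (pv N v (k : ℕ)) * Real.sqrt (pv N v (l : ℕ)) / (v i * v i)) else 0) := by
      intro i
      simp only [Cmat, Matrix.of_apply]
      split_ifs <;> (try omega) <;> ring
    rw [Finset.sum_congr rfl (fun i _ => hdecomp i), sum_ite_nat, dif_pos hkN]
    have hvp := hv (⟨(k : ℕ) + 1, hkN⟩ : Fin N)
    have h1 := sqrt_pv_pos hv hkN
    have h2 := sqrt_pv_pos hv hlN
    have : 0 < Real.sqrt (pv N v (k : ℕ)) * Real.sqrt (pv N v (l : ℕ))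
        / (v ⟨(k : ℕ) + 1, hkN⟩ * v ⟨(k : ℕ) + 1, hkN⟩) :=
      div_pos (mul_pos h1 h2) (mul_pos hvp hvp)
    linarith
  · by_cases hadj' : (k : ℕ) = (l : ℕ) + 1
    · have hdecomp : ∀ i : Fin N, Cmat N v i k * Cmat N v i l
          = (if (i : ℕ) = (l : ℕ) + 1 then
              -(Real.sqrt (pv N v (k : ℕ)) * Real.sqrt (pv N v (l : ℕ)) / (v i * v i)) else 0) := by
        intro i
        simp only [Cmat, Matrix.of_apply]
        split_ifs <;> (try omega) <;> ring
      rw [Finset.sum_congr rfl (fun i _ => hdecomp i), sum_ite_nat, dif_pos hlN]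
      have hvp := hv (⟨(l : ℕ) + 1, hlN⟩ : Fin N)
      have h1 := sqrt_pv_pos hv hkN
      have h2 := sqrt_pv_pos hv hlN
      have : 0 < Real.sqrt (pv N v (k : ℕ)) * Real.sqrt (pv N v (l : ℕ))
          / (v ⟨(l : ℕ) + 1, hlN⟩ * v ⟨(l : ℕ) + 1, hlN⟩) :=
        div_pos (mul_pos h1 h2) (mul_pos hvp hvp)
      linarith
    · have hdecomp : ∀ i : Fin N, Cmat N v i k * Cmat N v i l = 0 := by
        intro i
        simp only [Cmat, Matrix.of_apply]
        split_ifs <;> (try omega) <;> ring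
      rw [Finset.sum_congr rfl (fun i _ => hdecomp i), Finset.sum_const_zero]

lemma T_adj (hv : ∀ i, 0 < v i) (k : ℕ) (hk : k + 1 < N - 1) :
    ((Cmat N v)ᵀ * Cmat N v) ⟨k, by omega⟩ ⟨k + 1, hk⟩ < 0
    ∧ ((Cmat N v)ᵀ * Cmat N v) ⟨k + 1, hk⟩ ⟨k, by omega⟩ < 0 := by
  have hkN : k + 1 < N := by omega
  have hkN2 : k + 2 < N := by omega
  constructor
  · rw [Matrix.mul_apply]
    simp only [Matrix.transpose_apply]
    have hdecomp : ∀ i : Fin N, Cmat N v i ⟨k, by omega⟩ * Cmat N v i ⟨k + 1, hk⟩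
        = (if (i : ℕ) = k + 1 then
            -(Real.sqrt (pv N v k) * Real.sqrt (pv N v (k + 1)) / (v i * v i)) else 0) := by
      intro i
      simp only [Cmat, Matrix.of_apply, Fin.val_mk]
      split_ifs <;> (try omega) <;> ring
    rw [Finset.sum_congr rfl (fun i _ => hdecomp i), sum_ite_nat, dif_pos hkN]
    have hvp := hv (⟨k + 1, hkN⟩ : Fin N)
    have h1 := sqrt_pv_pos hv hkN
    have h2 := sqrt_pv_pos hv hkN2
    have : 0 < Real.sqrt (pv N v k) * Real.sqrt (pv N v (k + 1))
        / (v ⟨k + 1, hkN⟩ * v ⟨k + 1, hkN⟩) := div_pos (mul_pos h1 h2) (mul_pos hvp hvp)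
    linarith
  · rw [Matrix.mul_apply]
    simp only [Matrix.transpose_apply]
    have hdecomp : ∀ i : Fin N, Cmat N v i ⟨k + 1, hk⟩ * Cmat N v i ⟨k, by omega⟩
        = (if (i : ℕ) = k + 1 then
            -(Real.sqrt (pv N v k) * Real.sqrt (pv N v (k + 1)) / (v i * v i)) else 0) := by
      intro i
      simp only [Cmat, Matrix.of_apply, Fin.val_mk]
      split_ifs <;> (try omega) <;> ring
    rw [Finset.sum_congr rfl (fun i _ => hdecomp i), sum_ite_nat, dif_pos hkN]
    have hvp := hv (⟨k + 1, hkN⟩ : Fin N)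
    have h1 := sqrt_pv_pos hv hkN
    have h2 := sqrt_pv_pos hv hkN2
    have : 0 < Real.sqrt (pv N v k) * Real.sqrt (pv N v (k + 1))
        / (v ⟨k + 1, hkN⟩ * v ⟨k + 1, hkN⟩) := div_pos (mul_pos h1 h2) (mul_pos hvp hvp)
    linarith

lemma C_row (hv : ∀ i, 0 < v i) (ε : Fin (N - 1) → ℝ) (m : ℕ) (hm : m < N) :
    (Cmat N v).mulVec ε ⟨m, hm⟩
      = (if h : m < N - 1 then Real.sqrt (pv N v m) / v ⟨m, hm⟩ * ε ⟨m, h⟩ else 0)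
        - (if h : m - 1 < N - 1 ∧ 1 ≤ m then
            Real.sqrt (pv N v (m - 1)) / v ⟨m, hm⟩ * ε ⟨m - 1, h.1⟩ else 0) := by
  have hdecomp : ∀ k : Fin (N - 1), Cmat N v ⟨m, hm⟩ k * ε k
      = (if (k : ℕ) = m then Real.sqrt (pv N v (k : ℕ)) / v ⟨m, hm⟩ * ε k else 0)
        + (if (k : ℕ) + 1 = m then -(Real.sqrt (pv N v (k : ℕ)) / v ⟨m, hm⟩ * ε k) else 0) := by
    intro k
    simp only [Cmat, Matrix.of_apply, Fin.val_mk]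
    split_ifs <;> (try omega) <;> ring
  show (∑ k, Cmat N v ⟨m, hm⟩ k * ε k) = _
  rw [Finset.sum_congr rfl (fun k _ => hdecomp k), Finset.sum_add_distrib,
    sum_ite_nat, sum_ite_nat']
  split_ifs <;> (try simp only [Fin.val_mk]) <;> ring

end CFacts3

section CFacts4
variable {N : ℕ} {v : Fin N → ℝ}

lemma C_inj (hN : 2 ≤ N) (hv : ∀ i, 0 < v i) {ε : Fin (N - 1) → ℝ}
    (hc : (Cmat N v).mulVec ε = 0) : ε = 0 := by
  have key : ∀ m : ℕ, ∀ hm : m < N - 1, ε ⟨m, hm⟩ = 0 := by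
    intro m
    induction m with
    | zero =>
      intro hm
      have h0 := congrFun hc ⟨0, by omega⟩
      rw [C_row hv ε 0 (by omega)] at h0
      rw [dif_pos hm, dif_neg (by omega)] at h0
      simp only [Pi.zero_apply, sub_zero] at h0
      have hpos : 0 < Real.sqrt (pv N v 0) / v ⟨0, by omega⟩ :=
        div_pos (sqrt_pv_pos hv (by omega)) (hv _)
      rcases mul_eq_zero.mp h0 with h | h
      · exact absurd h (ne_of_gt hpos)
      · exact h
    | succ m ih =>
      intro hm
      have h0 := congrFun hc ⟨m + 1, by omega⟩
      rw [C_row hv ε (m + 1) (by omega)] at h0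
      rw [dif_pos hm, dif_pos (⟨by omega, by omega⟩ : m + 1 - 1 < N - 1 ∧ 1 ≤ m + 1)] at h0
      simp only [Pi.zero_apply] at h0
      rw [show (⟨m + 1 - 1, by omega⟩ : Fin (N - 1)) = ⟨m, by omega⟩ from rfl] at h0
      rw [ih (by omega), mul_zero, sub_zero] at h0
      have hpos : 0 < Real.sqrt (pv N v (m + 1)) / v ⟨m + 1, by omega⟩ :=
        div_pos (sqrt_pv_pos hv (by omega)) (hv _)
      rcases mul_eq_zero.mp h0 with h | h
      · exact absurd h (ne_of_gt hpos)
      · exact h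
  funext k
  have := key (k : ℕ) k.isLt
  simpa using this

lemma Ct_apply (u : Fin N → ℝ) (k : Fin (N - 1)) :
    (Cmat N v)ᵀ.mulVec u k
      = Real.sqrt (pv N v (k : ℕ))
        * (extZ N u (k : ℕ) / extZ N v (k : ℕ)
            - extZ N u ((k : ℕ) + 1) / extZ N v ((k : ℕ) + 1)) := by
  have hkN : (k : ℕ) < N := by have := k.isLt; omega
  have hkN1 : (k : ℕ) + 1 < N := by have := k.isLt; omega
  have hdecomp : ∀ i : Fin N, (Cmat N v)ᵀ k i * u i
      = (if (i : ℕ) = (k : ℕ) then Real.sqrt (pv N v (k : ℕ)) / v i * u i else 0)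
        + (if (i : ℕ) = (k : ℕ) + 1 then -(Real.sqrt (pv N v (k : ℕ)) / v i * u i) else 0) := by
    intro i
    simp only [Matrix.transpose_apply, Cmat, Matrix.of_apply]
    split_ifs <;> (try omega) <;> ring
  show (∑ i, (Cmat N v)ᵀ k i * u i) = _
  rw [Finset.sum_congr rfl (fun i _ => hdecomp i), Finset.sum_add_distrib,
    sum_ite_nat, sum_ite_nat, dif_pos hkN, dif_pos hkN1]
  rw [show extZ N u (k : ℕ) = u ⟨(k : ℕ), hkN⟩ from by rw [extZ, dif_pos hkN],
    show extZ N v (k : ℕ) = v ⟨(k : ℕ), hkN⟩ from by rw [extZ, dif_pos hkN],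
    show extZ N u ((k : ℕ) + 1) = u ⟨(k : ℕ) + 1, hkN1⟩ from by rw [extZ, dif_pos hkN1],
    show extZ N v ((k : ℕ) + 1) = v ⟨(k : ℕ) + 1, hkN1⟩ from by rw [extZ, dif_pos hkN1]]
  ring

end CFacts4


set_option maxHeartbeats 1000000 in
theorem path_linear_simplify (N : ℕ) (hN : 2 ≤ N) (α : ℝ) (hα : 0 ≤ α)
    (l1 l2 : ℝ)
    (h : TwoSmallest (pathH N (fun i => α * ((i : ℝ) - 1))) l1 l2)
    (u1 u2 : Fin N → ℝ)
    (hu1 : (pathH N (fun i => α * ((i : ℝ) - 1))).mulVec u1 = l1 • u1)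
    (hu1n : ∑ i, u1 i ^ 2 = 1)
    (hu2 : (pathH N (fun i => α * ((i : ℝ) - 1))).mulVec u2 = l2 • u2)
    (hu2n : ∑ i, u2 i ^ 2 = 1)
    (hfirst : u2 ⟨0, by omega⟩ ^ 2 ≤ u1 ⟨0, by omega⟩ ^ 2) :
    0 ≤ ∑ i : Fin N, (i : ℝ) * (u2 i ^ 2 - u1 i ^ 2) := by
  classical
  obtain ⟨hE1, hE2, hg, hmin⟩ := h
  have hu1' : (Amat N α).mulVec u1 = l1 • u1 := hu1
  have hu2' : (Amat N α).mulVec u2 = l2 • u2 := hu2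
  have hl1 : ∀ μ, IsEigen (Amat N α) μ → l1 ≤ μ := fun μ hμ => (hmin μ hμ).1
  have hl2 : ∀ μ, IsEigen (Amat N α) μ → μ ≠ l1 → l2 ≤ μ := fun μ hμ hne => (hmin μ hμ).2 hne
  have h0N : (0 : ℕ) < N := by omega
  have h1N : (1 : ℕ) < N := by omega
  have hq1 : u1 ⬝ᵥ (Amat N α).mulVec u1 = l1 := by
    rw [hu1']
    have he : u1 ⬝ᵥ (l1 • u1) = l1 * ∑ i, u1 i ^ 2 := by
      simp only [dotProduct, Pi.smul_apply, smul_eq_mul, Finset.mul_sum]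
      exact Finset.sum_congr rfl (fun i _ => by ring)
    rw [he, hu1n, mul_one]
  set v : Fin N → ℝ := fun i => |u1 i| with hvdef
  have hvsq : ∀ i, v i ^ 2 = u1 i ^ 2 := fun i => sq_abs (u1 i)
  have hvnorm : ∑ i, v i ^ 2 = 1 := by
    rw [← hu1n]; exact Finset.sum_congr rfl fun i _ => hvsq i
  have hvdot : v ⬝ᵥ v = 1 := by
    have : v ⬝ᵥ v = ∑ i, v i ^ 2 := by
      simp only [dotProduct]; exact Finset.sum_congr rfl (fun i _ => by ring)
    rw [this, hvnorm]
  have hveq : (Amat N α).mulVec v = l1 • v := by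
    apply G12 (Amat N α) A_herm l1 hl1 v
    rw [hvdot, mul_one]
    calc v ⬝ᵥ (Amat N α).mulVec v ≤ u1 ⬝ᵥ (Amat N α).mulVec u1 :=
          abs_quad_le (Amat N α) A_offdiag u1
      _ = l1 := hq1
  have hvne : v ≠ 0 := by
    intro h0
    rw [h0] at hvdot
    simp [dotProduct] at hvdot
  have hvpos : ∀ i, 0 < v i :=
    pos_of_nonneg_eig (Amat N α) l1 A_offdiag (fun k hk => A_adjR k hk)
      (fun k hk => A_adjL k hk) v hveq (fun i => abs_nonneg _) hvne
  -- normalize u2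
  have hu2ne : u2 ≠ 0 := by
    intro h0; rw [h0] at hu2n; simp at hu2n
  have hu20 : u2 ⟨0, h0N⟩ ≠ 0 := by
    intro hz
    exact hu2ne (eig_zero0 hN hu2' (by rw [extZ, dif_pos h0N]; exact hz))
  set u : Fin N → ℝ := if 0 < u2 ⟨0, h0N⟩ then u2 else -u2 with hudef
  have hueig : (Amat N α).mulVec u = l2 • u := by
    rw [hudef]; split_ifs
    · exact hu2'
    · rw [Matrix.mulVec_neg, hu2']
      funext i; simp
  have husq : ∀ i, u i ^ 2 = u2 i ^ 2 := by
    intro i; rw [hudef]; split_ifs <;> simp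
  have hun : ∑ i, u i ^ 2 = 1 := by
    rw [← hu2n]; exact Finset.sum_congr rfl fun i _ => husq i
  have hu0 : 0 < u ⟨0, h0N⟩ := by
    rw [hudef]; split_ifs with hc
    · exact hc
    · push_neg at hc
      simp only [Pi.neg_apply]
      rcases lt_or_eq_of_le hc with hlt | heq
      · linarith
      · exact absurd heq hu20
  have hune : u ≠ 0 := by
    intro h0; rw [h0] at hun; simp at hun
  -- the T operator
  have hCCt : Cmat N v * (Cmat N v)ᵀ = Amat N α - l1 • 1 := CCt hN hvpos hveq
  set T : Matrix (Fin (N - 1)) (Fin (N - 1)) ℝ := (Cmat N v)ᵀ * Cmat N v with hTdef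
  have hg' : (0 : ℝ) < l2 - l1 := by linarith
  have hTlb : ∀ ν, IsEigen T ν → l2 - l1 ≤ ν := by
    rintro ν ⟨ε, hεne, hεeig⟩
    have hCε : (Cmat N v).mulVec ε ≠ 0 := fun hz => hεne (C_inj hN hvpos hz)
    have h1 : (Amat N α - l1 • 1).mulVec ((Cmat N v).mulVec ε)
        = ν • (Cmat N v).mulVec ε := by
      rw [← hCCt, mulVec_mulVec, Matrix.mul_assoc, ← hTdef, ← mulVec_mulVec, hεeig,
        mulVec_smul]
    rw [Matrix.sub_mulVec, Matrix.smul_mulVec, Matrix.one_mulVec] at h1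
    have hAx : (Amat N α).mulVec ((Cmat N v).mulVec ε)
        = (l1 + ν) • (Cmat N v).mulVec ε := by
      have h2 := eq_add_of_sub_eq h1
      rw [h2, add_smul, add_comm]
    have hν0 : ν ≠ 0 := by
      intro hz
      rw [hz] at hεeig
      have hdot : (Cmat N v).mulVec ε ⬝ᵥ (Cmat N v).mulVec ε = 0 := by
        rw [dotProduct_mulVec, ← mulVec_transpose, mulVec_mulVec, ← hTdef, hεeig]
        simp
      exact hCε (dotProduct_self_eq_zero.mp hdot)
    have heig2 : IsEigen (Amat N α) (l1 + ν) := ⟨_, hCε, hAx⟩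
    have := hl2 (l1 + ν) heig2 (by intro hh; apply hν0; linarith)
    linarith
  set δ : Fin (N - 1) → ℝ := (Cmat N v)ᵀ.mulVec u with hδdef
  have hAu : (Amat N α - l1 • 1).mulVec u = (l2 - l1) • u := by
    rw [Matrix.sub_mulVec, Matrix.smul_mulVec, Matrix.one_mulVec, hueig, ← sub_smul]
  have hδeig : T.mulVec δ = (l2 - l1) • δ := by
    rw [hδdef, hTdef, mulVec_mulVec, Matrix.mul_assoc, ← mulVec_mulVec, hCCt, hAu,
      mulVec_smul]
  have hδne : δ ≠ 0 := by
    intro h0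
    have hz : (Amat N α - l1 • 1).mulVec u = 0 := by
      rw [← hCCt, ← mulVec_mulVec, ← hδdef, h0, Matrix.mulVec_zero]
    rw [hAu] at hz
    rcases smul_eq_zero.mp hz with hc | hc
    · linarith
    · exact hune hc
  have hδdot : δ ⬝ᵥ T.mulVec δ = (l2 - l1) * (δ ⬝ᵥ δ) := by
    rw [hδeig]
    simp only [dotProduct, Pi.smul_apply, smul_eq_mul, Finset.mul_sum]
    exact Finset.sum_congr rfl (fun i _ => by ring)
  have habs2 : (fun k => |δ k|) ⬝ᵥ (fun k => |δ k|) = δ ⬝ᵥ δ := by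
    simp only [dotProduct]
    exact Finset.sum_congr rfl (fun i _ => abs_mul_abs_self _)
  have hTabs : T.mulVec (fun k => |δ k|) = (l2 - l1) • (fun k => |δ k|) := by
    apply G12 T (T_herm (Cmat N v)) (l2 - l1) hTlb
    rw [habs2]
    calc (fun k => |δ k|) ⬝ᵥ T.mulVec (fun k => |δ k|) ≤ δ ⬝ᵥ T.mulVec δ :=
          abs_quad_le T (T_offdiag hvpos) δ
      _ = (l2 - l1) * (δ ⬝ᵥ δ) := hδdot
  -- δ at 0 is positive
  have hV0 : 0 < extZ N v 0 := extZ_pos hvpos h0N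
  have hV1 : 0 < extZ N v 1 := extZ_pos hvpos h1N
  have hU0 : 0 < extZ N u 0 := by rw [extZ, dif_pos h0N]; exact hu0
  have hrv := row0 (α := α) hN hveq
  have hru := row0 (α := α) hN hueig
  have hkey : extZ N u 0 * extZ N v 1 - extZ N u 1 * extZ N v 0
      = (l2 - l1) * (extZ N u 0 * extZ N v 0) := by
    linear_combination (extZ N v 0) * hru - (extZ N u 0) * hrv
  have h0N1 : (0 : ℕ) < N - 1 := by omega
  have hδ0pos : 0 < δ ⟨0, h0N1⟩ := by
    rw [hδdef, Ct_apply]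
    simp only [Fin.val_mk]
    apply mul_pos (sqrt_pv_pos hvpos (by omega : (0:ℕ) + 1 < N))
    rw [sub_pos, div_lt_div_iff₀ hV1 hV0]
    nlinarith [mul_pos hU0 hV0]
  -- δ is nonnegative
  have hδnonneg : ∀ k, 0 ≤ δ k := by
    by_cases hxm : (fun k => |δ k| - δ k) = 0
    · intro k
      have := congrFun hxm k
      simp only [Pi.zero_apply, sub_eq_zero] at this
      rw [← this]
      exact abs_nonneg _
    · exfalso
      have hxeig : T.mulVec (fun k => |δ k| - δ k)
          = (l2 - l1) • (fun k => |δ k| - δ k) := by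
        rw [show (fun k => |δ k| - δ k) = (fun k => |δ k|) - δ from rfl,
          Matrix.mulVec_sub, hTabs, hδeig, ← smul_sub]
      have hpos := pos_of_nonneg_eig T (l2 - l1) (T_offdiag hvpos)
        (fun k hk => (T_adj hvpos k hk).1) (fun k hk => (T_adj hvpos k hk).2)
        _ hxeig (fun k => sub_nonneg.mpr (le_abs_self _)) hxm
      have h00 := hpos ⟨0, h0N1⟩
      rw [abs_of_pos hδ0pos] at h00
      simp at h00
  -- ratio is monotone
  have hstep : ∀ k : ℕ, k + 1 < N →
      extZ N u (k + 1) / extZ N v (k + 1) ≤ extZ N u k / extZ N v k := by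
    intro k hk
    have hd := hδnonneg ⟨k, by omega⟩
    rw [hδdef, Ct_apply] at hd
    simp only [Fin.val_mk] at hd
    have hs := sqrt_pv_pos hvpos hk
    nlinarith [hd, hs]
  have hmono : ∀ i j : ℕ, i ≤ j → j < N →
      extZ N u j / extZ N v j ≤ extZ N u i / extZ N v i := by
    intro i j
    induction j with
    | zero =>
      intro hij _
      have : i = 0 := by omega
      rw [this]
    | succ j ih =>
      intro hij hj
      by_cases hc : i = j + 1
      · rw [hc]
      · exact le_trans (hstep j hj) (ih (by omega) (by omega))
  have hfirst' : u ⟨0, h0N⟩ ≤ v ⟨0, h0N⟩ := by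
    have hsq : u ⟨0, h0N⟩ ^ 2 ≤ v ⟨0, h0N⟩ ^ 2 := by
      rw [husq, hvsq]; exact hfirst
    nlinarith [hu0, hvpos ⟨0, h0N⟩]
  have hr0 : extZ N u 0 / extZ N v 0 ≤ 1 := by
    rw [div_le_one hV0, extZ, extZ, dif_pos h0N, dif_pos h0N]
    exact hfirst'
  have hle : ∀ i : Fin N, u i ≤ v i := by
    intro i
    have hm := le_trans (hmono 0 (i : ℕ) (by omega) i.isLt) hr0
    rw [extZ_val, extZ_val] at hm
    exact (div_le_one (hvpos i)).mp hm
  have hup : ∀ i j : Fin N, (i : ℕ) ≤ (j : ℕ) → u i < -v i → u j < -v j := by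
    intro i j hij hi
    have hm := hmono (i : ℕ) (j : ℕ) hij j.isLt
    rw [extZ_val, extZ_val, extZ_val, extZ_val] at hm
    have h1 : u i / v i < -1 := by
      rw [div_lt_iff₀ (hvpos i)]; linarith
    have h2 := (div_lt_iff₀ (hvpos j)).mp (lt_of_le_of_lt hm h1)
    linarith
  -- final combinatorial step
  have hgoal : (∑ i : Fin N, (i : ℝ) * (u2 i ^ 2 - u1 i ^ 2))
      = ∑ i : Fin N, (i : ℝ) * (u i ^ 2 - v i ^ 2) := by
    exact Finset.sum_congr rfl (fun i _ => by rw [husq, hvsq])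
  rw [hgoal]
  have hsum0 : ∑ i : Fin N, (u i ^ 2 - v i ^ 2) = 0 := by
    rw [Finset.sum_sub_distrib, hun, hvnorm, sub_self]
  set SS : Finset (Fin N) := Finset.univ.filter (fun i => u i < -v i) with hSS
  rcases SS.eq_empty_or_nonempty with hSe | hSne
  · have hz : ∀ i ∈ Finset.univ, u i ^ 2 - v i ^ 2 ≤ 0 := by
      intro i _
      have hnot : ¬(u i < -v i) := by
        intro hc
        have hmem : i ∈ SS := by rw [hSS]; simp [hc]
        rw [hSe] at hmem
        simp at hmem
      push_neg at hnot
      nlinarith [hle i]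
    have hall := (Finset.sum_eq_zero_iff_of_nonpos hz).mp hsum0
    apply le_of_eq
    symm
    apply Finset.sum_eq_zero
    intro i _
    rw [hall i (Finset.mem_univ i), mul_zero]
  · set K := SS.min' hSne with hKdef
    have hKmem : K ∈ SS := SS.min'_mem hSne
    have hKlt : u K < -v K := by
      rw [hSS] at hKmem
      exact (Finset.mem_filter.mp hKmem).2
    have hterm : ∀ i ∈ Finset.univ,
        (K : ℝ) * (u i ^ 2 - v i ^ 2) ≤ (i : ℝ) * (u i ^ 2 - v i ^ 2) := by
      intro i _
      by_cases hi : u i < -v i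
      · have hiSS : i ∈ SS := by rw [hSS]; simp [hi]
        have hKi : (K : ℕ) ≤ (i : ℕ) := SS.min'_le i hiSS
        have ht : 0 ≤ u i ^ 2 - v i ^ 2 := by nlinarith [hvpos i]
        have hc : ((K : ℕ) : ℝ) ≤ ((i : ℕ) : ℝ) := by exact_mod_cast hKi
        nlinarith
      · have hiK : (i : ℕ) < (K : ℕ) := by
          by_contra hcon
          push_neg at hcon
          exact hi (hup K i hcon hKlt)
        push_neg at hi
        have ht : u i ^ 2 - v i ^ 2 ≤ 0 := by nlinarith [hle i]
        have hc : ((i : ℕ) : ℝ) ≤ ((K : ℕ) : ℝ) := by exact_mod_cast le_of_lt hiK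
        nlinarith
    calc (0 : ℝ) = (K : ℝ) * ∑ i : Fin N, (u i ^ 2 - v i ^ 2) := by rw [hsum0, mul_zero]
      _ = ∑ i : Fin N, (K : ℝ) * (u i ^ 2 - v i ^ 2) := by rw [Finset.mul_sum]
      _ ≤ ∑ i : Fin N, (i : ℝ) * (u i ^ 2 - v i ^ 2) := Finset.sum_le_sum hterm
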